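/- Let K be a quadratically closed field. A subgroup G of SL(2,K) is reducible if and only if for every pair of elements A, B ∈ G, the subgroup generated by A and B is reducible. -/

import Mathlib

/-- `SL(2,K)`: 2×2 matrices of determinant 1. -/
abbrev SL2 (K : Type*) [CommRing K] := Matrix.SpecialLinearGroup (Fin 2) K

/-- A field is quadratically closed if every monic quadratic has a root. -/
def QuadClosed (K : Type*) [Field K] : Prop :=
  ∀ a b : K, ∃ x : K, x ^ 2 + a * x + b = 0

/-- The trace of an element of `SL(2,K)`. -/
def trM {K : Type*} [CommRing K] (A : SL2 K) : K :=
  Matrix.trace (A : Matrix (Fin 2) (Fin 2) K)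

/-- `f : G → K` is an `SL(2,K)` character: the trace function of some representation. -/
def IsSL2Character {K : Type*} [CommRing K] {G : Type*} [Group G] (f : G → K) : Prop :=
  ∃ ρ : G →* SL2 K, ∀ g : G, f g = trM (ρ g)

/-- A subgroup of `SL(2,K)` is reducible if some 1-dimensional subspace (the span of a
nonzero vector `v`) is invariant under all its elements. -/
def IsReducibleSubgroup {K : Type*} [Field K] (H : Subgroup (SL2 K)) : Prop :=
  ∃ v : Fin 2 → K, v ≠ 0 ∧ ∀ A ∈ H, ∃ c : K,
    Matrix.mulVec (A : Matrix (Fin 2) (Fin 2) K) v = c • v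

/-- A representation to `SL(2,K)` is reducible if some 1-dimensional subspace is invariant
under the image. -/
def IsReducibleRep {K : Type*} [Field K] {G : Type*} [Group G] (ρ : G →* SL2 K) : Prop :=
  ∃ v : Fin 2 → K, v ≠ 0 ∧ ∀ g : G, ∃ c : K,
    Matrix.mulVec ((ρ g : SL2 K) : Matrix (Fin 2) (Fin 2) K) v = c • v

section Helpers
variable {K : Type*} [Field K]

private lemma prop_of_det_zero {v w : Fin 2 → K} (hv : v ≠ 0)
    (h : v 0 * w 1 - v 1 * w 0 = 0) : ∃ t : K, w = t • v := by
  by_cases h0 : v 0 = 0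
  · have h1 : v 1 ≠ 0 := by
      intro h1; apply hv; funext i; fin_cases i <;> simpa [h0]
    have hw0 : w 0 = 0 := by
      have hz : v 1 * w 0 = 0 := by linear_combination -h + w 1 * h0
      exact (mul_eq_zero.mp hz).resolve_left h1
    refine ⟨w 1 / v 1, ?_⟩
    funext i; fin_cases i <;> simp [h0, hw0, div_mul_cancel₀, h1]
  · refine ⟨w 0 / v 0, ?_⟩
    funext i; fin_cases i
    · simp [div_mul_cancel₀, h0]
    · simp only [Fin.mk_one, Pi.smul_apply, smul_eq_mul]
      field_simp
      linear_combination h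
private lemma det_ne_zero_of_nonprop {v w : Fin 2 → K} (hv : v ≠ 0)
    (h : ¬ ∃ t : K, w = t • v) : v 0 * w 1 - v 1 * w 0 ≠ 0 :=
  fun hd => h (prop_of_det_zero hv hd)

/-- Cramer decomposition of any vector in terms of two vectors with nonzero "determinant". -/
private lemma cramer_decomp {v1 v2 : Fin 2 → K} (hd : v1 0 * v2 1 - v1 1 * v2 0 ≠ 0)
    (w : Fin 2 → K) : ∃ a b : K, w = a • v1 + b • v2 := by
  set d := v1 0 * v2 1 - v1 1 * v2 0 with hdd
  refine ⟨(w 0 * v2 1 - w 1 * v2 0) / d, (v1 0 * w 1 - v1 1 * w 0) / d, ?_⟩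
  funext i; fin_cases i <;>
  · simp only [Pi.add_apply, Pi.smul_apply, smul_eq_mul, Fin.zero_eta, Fin.mk_one]
    field_simp
    rw [hdd]
    ring
private lemma indep_of_det {v1 v2 : Fin 2 → K} (hd : v1 0 * v2 1 - v1 1 * v2 0 ≠ 0)
    {s t : K} (h : s • v1 + t • v2 = 0) : s = 0 ∧ t = 0 := by
  have h0 := congrFun h 0
  have h1 := congrFun h 1
  simp only [Pi.add_apply, Pi.smul_apply, smul_eq_mul, Pi.zero_apply] at h0 h1
  constructor
  · have hz : s * (v1 0 * v2 1 - v1 1 * v2 0) = 0 := by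
      linear_combination v2 1 * h0 - v2 0 * h1
    exact (mul_eq_zero.mp hz).resolve_right hd
  · have hz : t * (v1 0 * v2 1 - v1 1 * v2 0) = 0 := by
      linear_combination v1 0 * h1 - v1 1 * h0
    exact (mul_eq_zero.mp hz).resolve_right hd

/-- If a 2×2 matrix has some non-eigenvector, then any eigenvector is proportional to one of
two given non-proportional eigenvectors. -/
private lemma eigen_trichotomy {M : Matrix (Fin 2) (Fin 2) K} {w0 : Fin 2 → K}
    (hw0 : ¬ ∃ c : K, M.mulVec w0 = c • w0)
    {v1 v2 v3 : Fin 2 → K} {c1 c2 c3 : K}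
    (hv1 : v1 ≠ 0)
    (h1 : M.mulVec v1 = c1 • v1) (h2 : M.mulVec v2 = c2 • v2) (h3 : M.mulVec v3 = c3 • v3)
    (hnp : ¬ ∃ t : K, v2 = t • v1) :
    (∃ t : K, v3 = t • v1) ∨ (∃ t : K, v3 = t • v2) := by
  by_contra hc
  push_neg at hc
  obtain ⟨hn1, hn2⟩ := hc
  have hd := det_ne_zero_of_nonprop hv1 hnp
  obtain ⟨a, b, hab⟩ := cramer_decomp hd v3
  have ha : a ≠ 0 := by
    rintro rfl
    exact hn2 b (by simpa using hab)
  have hb : b ≠ 0 := by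
    rintro rfl
    exact hn1 a (by simpa using hab)
  -- eigen equation forces c1 = c3 = c2
  have key : (a * (c1 - c3)) • v1 + (b * (c2 - c3)) • v2 = 0 := by
    have heq := h3
    rw [hab, Matrix.mulVec_add, Matrix.mulVec_smul, Matrix.mulVec_smul, h1, h2] at heq
    funext i
    have hi := congrFun heq i
    simp only [Pi.add_apply, Pi.smul_apply, smul_eq_mul, Pi.zero_apply] at hi ⊢
    linear_combination hi
  obtain ⟨e1, e2⟩ := indep_of_det hd key
  have hc1 : c1 = c3 := sub_eq_zero.mp ((mul_eq_zero.mp e1).resolve_left ha)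
  have hc2 : c2 = c3 := sub_eq_zero.mp ((mul_eq_zero.mp e2).resolve_left hb)
  -- then every vector is an eigenvector, contradicting hw0
  obtain ⟨x, y, hxy⟩ := cramer_decomp hd w0
  apply hw0
  refine ⟨c3, ?_⟩
  rw [hxy, Matrix.mulVec_add, Matrix.mulVec_smul, Matrix.mulVec_smul, h1, h2, hc1, hc2]
  funext i
  simp only [Pi.add_apply, Pi.smul_apply, smul_eq_mul]
  ring

private lemma inv_mulVec {B : SL2 K} {v w : Fin 2 → K}
    (h : Matrix.mulVec (B : Matrix (Fin 2) (Fin 2) K) v = w) :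
    Matrix.mulVec ((B⁻¹ : SL2 K) : Matrix (Fin 2) (Fin 2) K) w = v := by
  rw [← h, Matrix.mulVec_mulVec, ← Matrix.SpecialLinearGroup.coe_mul, inv_mul_cancel]
  simp

private lemma eigval_ne_zero {B : SL2 K} {v : Fin 2 → K} {c : K} (hv : v ≠ 0)
    (h : Matrix.mulVec (B : Matrix (Fin 2) (Fin 2) K) v = c • v) : c ≠ 0 := by
  rintro rfl
  apply hv
  have := inv_mulVec h
  simpa using this.symm

/-- Scale an eigen-relation along a proportionality. -/
private lemma eigen_scale {M : Matrix (Fin 2) (Fin 2) K} {v w : Fin 2 → K} {c t : K}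
    (hw : w ≠ 0) (hwv : w = t • v) (h : M.mulVec w = c • w) : M.mulVec v = c • v := by
  have ht : t ≠ 0 := by rintro rfl; exact hw (by simpa using hwv)
  subst hwv
  rw [Matrix.mulVec_smul] at h
  have : t • M.mulVec v = t • (c • v) := by rw [h, smul_comm]
  exact smul_right_injective _ ht this
end Helpers

theorem subgroup_reducible_iff_two_generator_subgroups_reducible
    {K : Type*} [Field K] (hK : QuadClosed K) (G : Subgroup (SL2 K)) :
    IsReducibleSubgroup G ↔
      ∀ A B : SL2 K, A ∈ G → B ∈ G →
        IsReducibleSubgroup (Subgroup.closure ({A, B} : Set (SL2 K))) := by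
  constructor
  · rintro ⟨v, hv, hG⟩ A B hA hB
    refine ⟨v, hv, fun C hC => hG C ?_⟩
    have hsub : ({A, B} : Set (SL2 K)) ⊆ (G : Set (SL2 K)) :=
      Set.insert_subset_iff.mpr ⟨hA, Set.singleton_subset_iff.mpr hB⟩
    exact (Subgroup.closure_le G).mpr hsub hC
  · intro h
    have pair : ∀ A B : SL2 K, A ∈ G → B ∈ G → ∃ v : Fin 2 → K, v ≠ 0 ∧
        (∃ c : K, Matrix.mulVec (A : Matrix (Fin 2) (Fin 2) K) v = c • v) ∧
        (∃ c : K, Matrix.mulVec (B : Matrix (Fin 2) (Fin 2) K) v = c • v) := by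
      intro A B hA hB
      obtain ⟨v, hv, hall⟩ := h A B hA hB
      exact ⟨v, hv,
        hall A (Subgroup.subset_closure (by simp)),
        hall B (Subgroup.subset_closure (by simp))⟩
    by_contra hred
    have hnred : ∀ v : Fin 2 → K, v ≠ 0 →
        ∃ A ∈ G, ¬ ∃ c : K, Matrix.mulVec (A : Matrix (Fin 2) (Fin 2) K) v = c • v := by
      intro v hv
      by_contra hcon
      push_neg at hcon
      exact hred ⟨v, hv, hcon⟩
    by_cases hS : ∃ A ∈ G, ∃ w0 : Fin 2 → K,
        ¬ ∃ c : K, Matrix.mulVec (A : Matrix (Fin 2) (Fin 2) K) w0 = c • w0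
    · obtain ⟨A, hA, w0, hw0⟩ := hS
      obtain ⟨v1, hv1, ⟨c1, hAv1⟩, -⟩ := pair A A hA hA
      obtain ⟨B1, hB1, hB1v1⟩ := hnred v1 hv1
      obtain ⟨v2, hv2, ⟨c2, hAv2⟩, ⟨d, hB1v2⟩⟩ := pair A B1 hA hB1
      have hnp : ¬ ∃ t : K, v2 = t • v1 := by
        rintro ⟨t, rfl⟩
        exact hB1v1 ⟨d, eigen_scale hv2 rfl hB1v2⟩
      obtain ⟨B2, hB2, hB2v2⟩ := hnred v2 hv2
      -- B2 preserves the line of v1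
      obtain ⟨u, hu, ⟨cu, hAu⟩, ⟨c', hB2u⟩⟩ := pair A B2 hA hB2
      have htri := eigen_trichotomy hw0 hv1 hAv1 hAv2 hAu hnp
      have hB2v1 : Matrix.mulVec (B2 : Matrix (Fin 2) (Fin 2) K) v1 = c' • v1 := by
        rcases htri with ⟨t, ht⟩ | ⟨t, ht⟩
        · exact eigen_scale hu ht hB2u
        · exact absurd ⟨c', eigen_scale hu ht hB2u⟩ hB2v2
      have hc' : c' ≠ 0 := eigval_ne_zero hv1 hB2v1
      obtain ⟨v3, hv3, ⟨c3, hAv3⟩, ⟨e, hCv3⟩⟩ := pair A (B1 * B2) hA (G.mul_mem hB1 hB2)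
      have hCsplit : ∀ w : Fin 2 → K,
          Matrix.mulVec ((B1 * B2 : SL2 K) : Matrix (Fin 2) (Fin 2) K) w =
            Matrix.mulVec (B1 : Matrix (Fin 2) (Fin 2) K)
              (Matrix.mulVec (B2 : Matrix (Fin 2) (Fin 2) K) w) := by
        intro w
        rw [Matrix.mulVec_mulVec, Matrix.SpecialLinearGroup.coe_mul]
      rcases eigen_trichotomy hw0 hv1 hAv1 hAv2 hAv3 hnp with ⟨t, ht⟩ | ⟨t, ht⟩
      · -- v3 ∝ v1 : then B1 B2 fixes line v1, but B2 fixes it, so B1 does: contradiction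
        have hCv1 : Matrix.mulVec ((B1 * B2 : SL2 K) : Matrix (Fin 2) (Fin 2) K) v1 = e • v1 :=
          eigen_scale hv3 ht hCv3
        rw [hCsplit, hB2v1, Matrix.mulVec_smul] at hCv1
        refine hB1v1 ⟨c'⁻¹ * e, ?_⟩
        have h5 : c'⁻¹ • (c' • Matrix.mulVec (B1 : Matrix (Fin 2) (Fin 2) K) v1)
            = c'⁻¹ • (e • v1) := by rw [hCv1]
        rwa [smul_smul, inv_mul_cancel₀ hc', one_smul, smul_smul] at h5
      · -- v3 ∝ v2 : then B1 B2 fixes line v2, but B1 fixes it, so B2 does: contradiction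
        have hCv2 : Matrix.mulVec ((B1 * B2 : SL2 K) : Matrix (Fin 2) (Fin 2) K) v2 = e • v2 :=
          eigen_scale hv3 ht hCv3
        rw [hCsplit] at hCv2
        have hrel := inv_mulVec hCv2
        have hd0 : d ≠ 0 := eigval_ne_zero hv2 hB1v2
        have hinv : Matrix.mulVec ((B1⁻¹ : SL2 K) : Matrix (Fin 2) (Fin 2) K) v2 = d⁻¹ • v2 := by
          have h6 := inv_mulVec hB1v2
          rw [Matrix.mulVec_smul] at h6
          exact (eq_inv_smul_iff₀ hd0).mpr h6
        refine hB2v2 ⟨e * d⁻¹, ?_⟩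
        rw [← hrel, Matrix.mulVec_smul, hinv, smul_smul]
    · push_neg at hS
      refine hred ⟨![1, 0], by intro hz; simpa using congrFun hz 0, fun A hA => hS A hA ![1, 0]⟩
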